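/- Let a and b be relatively prime positive integers and let l = a mod b with 1 < l < b. Then (b² + 1)(a−1)(2a−1)/(6a²) − (a−1)·b/(2a) − (2b/a)·(R(a,b) − R(b,l) + s(1,l)) ≤ M_2(a;b) ≤ (b² + 1)(a−1)(2a−1)/(6a²) − (a−1)·b/(2a) − (2b/a)·(R(a,b) − R(b,l) − s(1,l)), where s(1,l) = l/12 − 1/4 + 1/(6l). -/

import Mathlib

open Finset

/-- Sum over range of identity, rational. -/
lemma sum_id_q (k : ℕ) : ∑ m ∈ range k, (m:ℚ) = (k:ℚ) * ((k:ℚ)-1) / 2 := by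
  induction k with
  | zero => simp
  | succ n ih => rw [Finset.sum_range_succ, ih]; push_cast; ring

lemma sum_sq_q (k : ℕ) : ∑ m ∈ range k, (m:ℚ)^2 = (k:ℚ) * ((k:ℚ)-1) * (2*(k:ℚ)-1) / 6 := by
  induction k with
  | zero => simp
  | succ n ih => rw [Finset.sum_range_succ, ih]; push_cast; ring

/-- permutation lemma -/
lemma perm_sum (h k : ℕ) (hk : 0 < k) (hco : Nat.Coprime h k) (g : ℕ → ℚ) :
    ∑ m ∈ range k, g (h * m % k) = ∑ m ∈ range k, g m := by
  rcases eq_or_lt_of_le (show 1 ≤ k from hk) with h1 | h1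
  · simp [← h1]
  obtain ⟨c, -, hc⟩ := Nat.exists_mul_mod_eq_one_of_coprime hco h1
  refine Finset.sum_nbij' (fun m => h * m % k) (fun m => c * m % k) ?_ ?_ ?_ ?_ ?_
  · intro a _; exact Finset.mem_range.2 (Nat.mod_lt _ hk)
  · intro a _; exact Finset.mem_range.2 (Nat.mod_lt _ hk)
  · intro a ha
    have := Finset.mem_range.1 ha
    calc c * (h * a % k) % k = c * (h * a) % k := Nat.mul_mod_mod ..
      _ = (h * c) * a % k := by ring_nf
      _ = (h * c % k) * a % k := by rw [Nat.mod_mul_mod]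
      _ = a := by rw [hc, one_mul, Nat.mod_eq_of_lt this]
  · intro a ha
    have := Finset.mem_range.1 ha
    calc h * (c * a % k) % k = (h * c % k) * a % k := by
          rw [Nat.mul_mod, Nat.mod_mod_of_dvd _ dvd_rfl, ← Nat.mul_mod, ← mul_assoc,
            Nat.mod_mul_mod]
      _ = a := by rw [hc, one_mul, Nat.mod_eq_of_lt this]
  · intro a _; rfl

section
variable (h k : ℕ)

noncomputable def Qs : ℚ := ∑ m ∈ range k, ((h*m/k : ℕ):ℚ)^2
noncomputable def As : ℚ := ∑ m ∈ range k, (m:ℚ) * ((h*m/k : ℕ):ℚ)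
noncomputable def Rs : ℚ := ∑ m ∈ range k, (m:ℚ) * ((h*m % k : ℕ):ℚ)
noncomputable def Ds : ℚ := Rs h k / (k:ℚ)^2 - ((k:ℚ)-1)/4

end

noncomputable def M2' (a b : ℕ) : ℚ := (1 / (a : ℚ)) * ∑ m ∈ range a, ((m * b / a : ℕ) : ℚ) ^ 2

lemma cast_div_eq (h k m : ℕ) (hk : 0 < k) :
    ((h*m/k : ℕ):ℚ) = ((h:ℚ)*m - ((h*m % k : ℕ):ℚ)) / k := by
  have := Nat.div_add_mod (h*m) k
  have hq : ((k * (h*m/k) + h*m % k : ℕ) : ℚ) = (h:ℚ)*m := by rw [this]; push_cast; ring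
  push_cast at hq
  field_simp
  linarith [hq]

lemma sum_mod_q (h k : ℕ) (hk : 0 < k) (hco : Nat.Coprime h k) :
    ∑ m ∈ range k, ((h*m % k : ℕ):ℚ) = (k:ℚ) * ((k:ℚ)-1) / 2 := by
  rw [perm_sum h k hk hco (fun n => (n:ℚ))]; exact sum_id_q k

lemma sum_mod_sq_q (h k : ℕ) (hk : 0 < k) (hco : Nat.Coprime h k) :
    ∑ m ∈ range k, ((h*m % k : ℕ):ℚ)^2 = (k:ℚ) * ((k:ℚ)-1) * (2*(k:ℚ)-1) / 6 := by
  rw [perm_sum h k hk hco (fun n => (n:ℚ)^2)]; exact sum_sq_q k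

lemma cast_mod_eq (h k m : ℕ) :
    ((h*m % k : ℕ):ℚ) = (h:ℚ)*m - (k:ℚ) * ((h*m/k : ℕ):ℚ) := by
  have := Nat.div_add_mod (h*m) k
  have hq : ((k * (h*m/k) + h*m % k : ℕ) : ℚ) = (h:ℚ)*m := by rw [this]; push_cast; ring
  push_cast at hq
  linarith

lemma Rs_eq (h k : ℕ) (hk : 0 < k) :
    Rs h k = (h:ℚ) * ((k:ℚ) * ((k:ℚ)-1) * (2*(k:ℚ)-1) / 6) - (k:ℚ) * As h k := by
  have : ∀ m ∈ range k, (m:ℚ) * ((h*m % k : ℕ):ℚ)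
      = (h:ℚ)*(m:ℚ)^2 - (k:ℚ)*((m:ℚ) * ((h*m/k : ℕ):ℚ)) := by
    intro m _; rw [cast_mod_eq h k m]; ring
  rw [Rs, Finset.sum_congr rfl this, Finset.sum_sub_distrib, ← Finset.mul_sum,
    ← Finset.mul_sum, sum_sq_q, As]

lemma Qs_eq (h k : ℕ) (hk : 0 < k) (hco : Nat.Coprime h k) :
    Qs h k = ((h:ℚ)^2 * ((k:ℚ) * ((k:ℚ)-1) * (2*(k:ℚ)-1) / 6) - 2*(h:ℚ)*Rs h k
      + (k:ℚ) * ((k:ℚ)-1) * (2*(k:ℚ)-1) / 6) / (k:ℚ)^2 := by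
  have hk' : (k:ℚ) ≠ 0 := by positivity
  rw [eq_div_iff (by positivity)]
  have hterm : ∀ m ∈ range k, ((h*m/k : ℕ):ℚ)^2 * (k:ℚ)^2
      = (h:ℚ)^2*(m:ℚ)^2 - 2*(h:ℚ)*((m:ℚ) * ((h*m % k : ℕ):ℚ)) + ((h*m % k : ℕ):ℚ)^2 := by
    intro m _
    rw [cast_div_eq h k m hk]
    field_simp
    ring
  calc Qs h k * (k:ℚ)^2 = ∑ m ∈ range k, ((h*m/k : ℕ):ℚ)^2 * (k:ℚ)^2 := by
        rw [Qs, Finset.sum_mul]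
    _ = ∑ m ∈ range k, ((h:ℚ)^2*(m:ℚ)^2 - 2*(h:ℚ)*((m:ℚ) * ((h*m % k : ℕ):ℚ))
          + ((h*m % k : ℕ):ℚ)^2) := Finset.sum_congr rfl hterm
    _ = (h:ℚ)^2 * (∑ m ∈ range k, (m:ℚ)^2) - 2*(h:ℚ) * Rs h k
          + ∑ m ∈ range k, ((h*m % k : ℕ):ℚ)^2 := by
        rw [Finset.sum_add_distrib, Finset.sum_sub_distrib, ← Finset.mul_sum,
          ← Finset.mul_sum, Rs]
    _ = _ := by rw [sum_sq_q, sum_mod_sq_q h k hk hco]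

lemma L_eq (h k : ℕ) (hk : 0 < k) (hco : Nat.Coprime h k) :
    ∑ m ∈ range k, ((h*m/k : ℕ):ℚ) = ((h:ℚ)-1) * ((k:ℚ)-1) / 2 := by
  have hk' : (k:ℚ) ≠ 0 := by positivity
  have : ∀ m ∈ range k, ((h*m/k : ℕ):ℚ) = ((h:ℚ)*m - ((h*m % k : ℕ):ℚ)) / k :=
    fun m _ => cast_div_eq h k m hk
  rw [Finset.sum_congr rfl this]
  rw [← Finset.sum_div, Finset.sum_sub_distrib, sum_mod_q h k hk hco, ← Finset.mul_sum,
    sum_id_q]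
  field_simp

lemma floor_eq_card (h k μ : ℕ) (hk : 0 < k) (hμ : μ < k) :
    h*μ/k = ((Finset.Ico 1 h).filter (fun ν => k*ν ≤ h*μ)).card := by
  have hfe : (Finset.Ico 1 h).filter (fun ν => k*ν ≤ h*μ) = Finset.Ico 1 (h*μ/k + 1) := by
    ext ν
    simp only [Finset.mem_filter, Finset.mem_Ico]
    constructor
    · rintro ⟨⟨h1, _⟩, hle⟩
      exact ⟨h1, Nat.lt_succ_of_le ((Nat.le_div_iff_mul_le hk).2 (by linarith [hle]))⟩
    · rintro ⟨h1, hlt⟩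
      have hνle : ν ≤ h*μ/k := Nat.lt_succ_iff.1 hlt
      rcases Nat.eq_zero_or_pos h with h0 | h0
      · subst h0; simp at hνle; omega
      have hdlt : h*μ/k < h := Nat.div_lt_of_lt_mul
        (by rw [mul_comm k h]; exact (Nat.mul_lt_mul_left h0).2 hμ)
      refine ⟨⟨h1, lt_of_le_of_lt hνle hdlt⟩, ?_⟩
      have := (Nat.le_div_iff_mul_le hk).1 hνle
      linarith
  rw [hfe, Nat.card_Ico, Nat.add_sub_cancel]

lemma As_eq (h k : ℕ) (hh : 0 < h) (hk : 0 < k) (hco : Nat.Coprime h k) :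
    As h k = ((h:ℚ)-1) * ((k:ℚ)*((k:ℚ)-1)/2) - Qs k h / 2 - ((h:ℚ)-1)*((k:ℚ)-1)/4 := by
  have hndvd : ∀ ν, 0 < ν → ν < h → ¬ (h ∣ k * ν) := by
    intro ν hν1 hνh hdvd
    have : h ∣ ν := hco.dvd_of_dvd_mul_left hdvd
    have := Nat.le_of_dvd hν1 this
    omega
  have step1 : As h k = ∑ μ ∈ range k, ∑ ν ∈ Finset.Ico 1 h,
      (if k*ν ≤ h*μ then (μ:ℚ) else 0) := by
    rw [As]
    refine Finset.sum_congr rfl fun μ hμ => ?_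
    rw [floor_eq_card h k μ hk (Finset.mem_range.1 hμ), ← Finset.sum_filter,
      Finset.sum_const, nsmul_eq_mul]
    ring
  rw [step1, Finset.sum_comm]
  have inner : ∀ ν ∈ Finset.Ico 1 h, (∑ μ ∈ range k, if k*ν ≤ h*μ then (μ:ℚ) else 0)
      = (k:ℚ)*((k:ℚ)-1)/2 - ((k*ν/h : ℕ):ℚ) * (((k*ν/h : ℕ):ℚ)+1)/2 := by
    intro ν hν
    rw [Finset.mem_Ico] at hν
    set e := k*ν/h with he
    have hcond : ∀ μ, μ < k → (k*ν ≤ h*μ ↔ e + 1 ≤ μ) := by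
      intro μ _
      have hne : k*ν ≠ h*μ := by
        intro heq
        exact hndvd ν hν.1 hν.2 ⟨μ, heq⟩
      rw [Nat.succ_le_iff, he, Nat.div_lt_iff_lt_mul hh, mul_comm μ h]
      omega
    have hfil : (range k).filter (fun μ => k*ν ≤ h*μ) = Finset.Ico (e+1) k := by
      ext μ
      simp only [Finset.mem_filter, Finset.mem_range, Finset.mem_Ico]
      constructor
      · rintro ⟨hμk, hle⟩; exact ⟨(hcond μ hμk).1 hle, hμk⟩
      · rintro ⟨hge, hμk⟩; exact ⟨hμk, (hcond μ hμk).2 hge⟩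
    have hek : e + 1 ≤ k := by
      have h2 : e < k := Nat.div_lt_of_lt_mul
        (by rw [mul_comm h k]; exact (Nat.mul_lt_mul_left hk).2 hν.2)
      omega
    rw [← Finset.sum_filter, hfil, Finset.sum_Ico_eq_sub _ hek, sum_id_q, sum_id_q]
    push_cast
    ring
  rw [Finset.sum_congr rfl inner]
  have hco' : Nat.Coprime k h := hco.symm
  have hsplit : ∑ ν ∈ Finset.Ico 1 h,
        ((k:ℚ)*((k:ℚ)-1)/2 - ((k*ν/h : ℕ):ℚ) * (((k*ν/h : ℕ):ℚ)+1)/2)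
      = (∑ ν ∈ range h, ((k:ℚ)*((k:ℚ)-1)/2 - ((k*ν/h : ℕ):ℚ) * (((k*ν/h : ℕ):ℚ)+1)/2))
        - (k:ℚ)*((k:ℚ)-1)/2 := by
    rw [Finset.sum_Ico_eq_sub _ hh, Finset.sum_range_one]
    simp
  rw [hsplit]
  have hexp : ∑ ν ∈ range h, ((k:ℚ)*((k:ℚ)-1)/2 - ((k*ν/h : ℕ):ℚ) * (((k*ν/h : ℕ):ℚ)+1)/2)
      = (h:ℚ) * ((k:ℚ)*((k:ℚ)-1)/2) - Qs k h / 2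
        - (((k:ℚ)-1) * ((h:ℚ)-1) / 2) / 2 := by
    have : ∀ ν ∈ range h, ((k:ℚ)*((k:ℚ)-1)/2 - ((k*ν/h : ℕ):ℚ) * (((k*ν/h : ℕ):ℚ)+1)/2)
        = (k:ℚ)*((k:ℚ)-1)/2 - (((k*ν/h : ℕ):ℚ)^2/2 + ((k*ν/h : ℕ):ℚ)/2) := by
      intro ν _; ring
    rw [Finset.sum_congr rfl this, Finset.sum_sub_distrib, Finset.sum_const,
      Finset.card_range, nsmul_eq_mul, Finset.sum_add_distrib, ← Finset.sum_div,
      ← Finset.sum_div, L_eq k h hh hco', ← Qs]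
    ring
  rw [hexp]
  ring

lemma Ds_add (h k : ℕ) (hh : 0 < h) (hk : 0 < k) (hco : Nat.Coprime h k) :
    Ds h k + Ds k h = -1/4 + (1/12) * ((h:ℚ)/(k:ℚ) + 1/((h:ℚ)*(k:ℚ)) + (k:ℚ)/(h:ℚ)) := by
  have hhq : (h:ℚ) ≠ 0 := by positivity
  have hkq : (k:ℚ) ≠ 0 := by positivity
  have hR2 : Rs k h = (h:ℚ)^2 * Ds k h + (h:ℚ)^2*((h:ℚ)-1)/4 := by
    rw [Ds]; field_simp; ring
  have h1 : Ds h k = Rs h k/(k:ℚ)^2 - ((k:ℚ)-1)/4 := rfl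
  rw [h1, Rs_eq h k hk, As_eq h k hh hk hco, Qs_eq k h hh hco.symm, hR2]
  field_simp
  ring

lemma Rs_mod (h k : ℕ) : Rs (h % k) k = Rs h k := by
  rw [Rs, Rs]
  refine Finset.sum_congr rfl fun m _ => ?_
  have hmod : (h % k) * m % k = h * m % k := by
    rw [Nat.mul_mod (h % k) m k, Nat.mod_mod_of_dvd h dvd_rfl, ← Nat.mul_mod]
  rw [hmod]

lemma Ds_mod (h k : ℕ) : Ds (h % k) k = Ds h k := by
  rw [Ds, Ds, Rs_mod]

lemma Ds_abs_le (h k : ℕ) (hk1 : 1 < k) (hco : Nat.Coprime h k) :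
    |Ds h k| ≤ (k:ℚ)/12 - 1/4 + 1/(6*(k:ℚ)) := by
  have hk : 0 < k := by omega
  have hkq : (k:ℚ) ≠ 0 := by positivity
  set f : ℕ → ℚ := fun m => ((h*m % k : ℕ):ℚ)/k - 1/2 with hf
  set g : ℕ → ℚ := fun m => (m:ℚ)/k - 1/2 with hg
  have hrange_fg : ∑ m ∈ range k, f m * g m = Ds h k + 1/4 := by
    have hterm : ∀ m ∈ range k, f m * g m
        = ((m:ℚ) * ((h*m % k : ℕ):ℚ))/(k:ℚ)^2 - ((h*m % k : ℕ):ℚ)/(2*(k:ℚ))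
          - (m:ℚ)/(2*(k:ℚ)) + 1/4 := by
      intro m _; simp only [hf, hg]; field_simp; ring
    rw [Finset.sum_congr rfl hterm, Finset.sum_add_distrib, Finset.sum_sub_distrib,
      Finset.sum_sub_distrib, ← Finset.sum_div, ← Finset.sum_div, ← Finset.sum_div,
      sum_mod_q h k hk hco, sum_id_q, Finset.sum_const, Finset.card_range, nsmul_eq_mul,
      Ds, Rs]
    field_simp
    ring
  have hrange_gg : ∑ m ∈ range k, g m ^ 2 = (k:ℚ)/12 + 1/(6*(k:ℚ)) := by
    have hterm : ∀ m ∈ range k, g m ^ 2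
        = (m:ℚ)^2/(k:ℚ)^2 - (m:ℚ)/(k:ℚ) + 1/4 := by
      intro m _; simp only [hg]; field_simp; ring
    rw [Finset.sum_congr rfl hterm, Finset.sum_add_distrib, Finset.sum_sub_distrib,
      ← Finset.sum_div, ← Finset.sum_div, sum_sq_q, sum_id_q, Finset.sum_const,
      Finset.card_range, nsmul_eq_mul]
    field_simp
    ring
  have hrange_ff : ∑ m ∈ range k, f m ^ 2 = (k:ℚ)/12 + 1/(6*(k:ℚ)) := by
    have := perm_sum h k hk hco (fun n => ((n:ℚ)/k - 1/2)^2)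
    simp only [hf]
    rw [this, ← hrange_gg]
  have hk1' : 1 ≤ k := hk
  have hf0 : f 0 = -(1/2) := by simp [hf]
  have hg0 : g 0 = -(1/2) := by simp [hg]
  have hIco_fg : ∑ m ∈ Finset.Ico 1 k, f m * g m = Ds h k := by
    rw [Finset.sum_Ico_eq_sub _ hk1', Finset.sum_range_one, hrange_fg, hf0, hg0]
    ring
  set W : ℚ := (k:ℚ)/12 - 1/4 + 1/(6*(k:ℚ)) with hW
  have hIco_ff : ∑ m ∈ Finset.Ico 1 k, f m ^ 2 = W := by
    rw [Finset.sum_Ico_eq_sub _ hk1', Finset.sum_range_one, hrange_ff, hf0, hW]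
    ring
  have hIco_gg : ∑ m ∈ Finset.Ico 1 k, g m ^ 2 = W := by
    rw [Finset.sum_Ico_eq_sub _ hk1', Finset.sum_range_one, hrange_gg, hg0, hW]
    ring
  have hcs := Finset.sum_mul_sq_le_sq_mul_sq (Finset.Ico 1 k) f g
  rw [hIco_fg, hIco_ff, hIco_gg] at hcs
  have hWnn : 0 ≤ W := by
    rw [← hIco_gg]
    exact Finset.sum_nonneg fun m _ => sq_nonneg _
  rw [abs_le]
  constructor <;> nlinarith [hcs, hWnn]

lemma M2_eq (a b : ℕ) (ha : 0 < a) (hco : Nat.Coprime b a) :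
    M2' a b = ((b:ℚ)^2+1) * ((a:ℚ)-1)*(2*(a:ℚ)-1)/(6*(a:ℚ)^2)
      - ((a:ℚ)-1)*(b:ℚ)/(2*(a:ℚ)) - (2*(b:ℚ)/(a:ℚ)) * Ds b a := by
  have haq : (a:ℚ) ≠ 0 := by positivity
  have h1 : M2' a b = (1/(a:ℚ)) * Qs b a := by
    rw [M2', Qs]
    congr 1
    exact Finset.sum_congr rfl fun m _ => by rw [mul_comm m b]
  rw [h1, Qs_eq b a ha hco, Ds]
  field_simp
  ring

/-- The rational function `R(x,y) = −1/4 + (1/12)(x/y + 1/(xy) + y/x)`. -/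
def Rfun (x y : ℚ) : ℚ := -1/4 + (1/12) * (x / y + 1 / (x * y) + y / x)

/-- The second moment `M_2(a;b) = (1/a)·∑_{m=0}^{a−1} ⌊m·b/a⌋²`. -/
def M2 (a b : ℕ) : ℚ := (1 / (a : ℚ)) * ∑ m ∈ Finset.range a, ((m * b / a : ℕ) : ℚ) ^ 2

/-- here `s(1,l) = l/12 − 1/4 + 1/(6l)`. -/
theorem M2_reciprocity_bounds (a b : ℕ) (ha : 0 < a) (hb : 0 < b)
    (hab : Nat.Coprime a b) (l : ℕ) (hl : l = a % b) (h1 : 1 < l) (h2 : l < b) :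
    ((b : ℚ) ^ 2 + 1) * ((a : ℚ) - 1) * (2 * (a : ℚ) - 1) / (6 * (a : ℚ) ^ 2)
        - ((a : ℚ) - 1) * (b : ℚ) / (2 * a)
        - (2 * (b : ℚ) / a) * (Rfun a b - Rfun b l + ((l : ℚ) / 12 - 1/4 + 1 / (6 * l)))
      ≤ M2 a b
    ∧ M2 a b
      ≤ ((b : ℚ) ^ 2 + 1) * ((a : ℚ) - 1) * (2 * (a : ℚ) - 1) / (6 * (a : ℚ) ^ 2)
        - ((a : ℚ) - 1) * (b : ℚ) / (2 * a)
        - (2 * (b : ℚ) / a) * (Rfun a b - Rfun b l - ((l : ℚ) / 12 - 1/4 + 1 / (6 * l))) := by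
  have hl0 : 0 < l := by omega
  have hba : Nat.Coprime b a := hab.symm
  have hlb : Nat.Coprime l b := by
    have : Nat.gcd b a = Nat.gcd (a % b) b := Nat.gcd_rec b a
    unfold Nat.Coprime
    rw [hl, ← this]
    exact hba
  -- exact formula for M2
  have hM2 : M2 a b = ((b:ℚ)^2+1) * ((a:ℚ)-1)*(2*(a:ℚ)-1)/(6*(a:ℚ)^2)
      - ((a:ℚ)-1)*(b:ℚ)/(2*(a:ℚ)) - (2*(b:ℚ)/(a:ℚ)) * Ds b a := by
    have : M2 a b = M2' a b := rfl
    rw [this, M2_eq a b ha hba]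
  -- reciprocity chain
  have hDba : Ds b a = Rfun a b - Rfun b l + Ds b l := by
    have r1 := Ds_add b a hb ha hba
    have r2 := Ds_add l b hl0 hb hlb
    have m1 : Ds a b = Ds l b := by rw [← Ds_mod a b, hl]
    have e1 : Rfun a b = -1/4 + (1/12) * ((b:ℚ)/(a:ℚ) + 1/((b:ℚ)*(a:ℚ)) + (a:ℚ)/(b:ℚ)) := by
      rw [Rfun]; ring
    have e2 : Rfun b l = -1/4 + (1/12) * ((l:ℚ)/(b:ℚ) + 1/((l:ℚ)*(b:ℚ)) + (b:ℚ)/(l:ℚ)) := by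
      rw [Rfun]; ring
    rw [e1, e2]
    rw [m1] at r1
    linarith [r1, r2]
  have habs := Ds_abs_le b l h1 hlb.symm
  rw [abs_le] at habs
  have hc : (0:ℚ) ≤ 2*(b:ℚ)/(a:ℚ) := by positivity
  rw [hM2, hDba]
  constructor
  · nlinarith [mul_le_mul_of_nonneg_left habs.2 hc]
  · nlinarith [mul_le_mul_of_nonneg_left habs.1 hc]
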